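/- (Theorem 9, first part) Let s ≥ 1 and let n₁, …, n_s, k ∈ ℕ with k ≥ 1 and N := n₁ + ⋯ + n_s > s·k. Then Σ_{l=0}^{N−sk} C(N−sk,l)·(−1)^l·ξ_{l+sk,q} = q²·Σ_{l=0}^{sk} C(sk,l)·(−1)^{sk−l}·ξ_{N−l,1/q}, where ξ_{j,1/q} denotes the q-Euler number with parameter 1/q in place of q. -/

import Mathlib

open Finset Filter

/-- `[a]_q = (1 - q^a)/(1 - q)` for `a : ℤ`. -/
noncomputable def qnum {p : ℕ} [Fact p.Prime] (q : ℚ_[p]) (a : ℤ) : ℚ_[p] :=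
  (1 - q ^ a) / (1 - q)

/-- Kim's q-Euler polynomial `ξ_{n,q}(x)` (closed form). -/
noncomputable def xi {p : ℕ} [Fact p.Prime] (q : ℚ_[p]) (n : ℕ) (x : ℤ) : ℚ_[p] :=
  ((1 + q) / (1 - q) ^ n) *
    ∑ l ∈ Finset.range (n + 1),
      (n.choose l : ℚ_[p]) * (-1) ^ l * q ^ ((l : ℤ) * x) / (1 + q ^ (l + 1))

/-- The fermionic p-adic `r`-integral statement:
`∫_{ℤ_p} g dμ_{-r} = L` means the Riemann-type sums
`(1/[p^N]_{-r}) · Σ_{x=0}^{p^N-1} g(x) (-r)^x` converge to `L`. -/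
def fermionicIntegral (p : ℕ) [Fact p.Prime] (r : ℚ_[p]) (g : ℕ → ℚ_[p]) (L : ℚ_[p]) : Prop :=
  Filter.Tendsto
    (fun N : ℕ => ((1 + r) / (1 - (-r) ^ (p ^ N))) * ∑ x ∈ Finset.range (p ^ N), g x * (-r) ^ x)
    Filter.atTop (nhds L)

/-- The q-Bernstein polynomial `B_{k,n}(x,q) = C(n,k) [x]_q^k [1-x]_{1/q}^{n-k}`. -/
noncomputable def bern {p : ℕ} [Fact p.Prime] (q : ℚ_[p]) (k n : ℕ) (x : ℤ) : ℚ_[p] :=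
  (n.choose k : ℚ_[p]) * (qnum q x) ^ k * (qnum q⁻¹ (1 - x)) ^ (n - k)

section AuxStmt18

open Polynomial


variable {p : ℕ} [Fact p.Prime]

/-- `u j = (1+q)/(1+q^(j+1))`. -/
noncomputable def uu (q : ℚ_[p]) (j : ℕ) : ℚ_[p] := (1 + q) / (1 + q ^ (j + 1))

/-- Truncated "fermionic moment" functional. -/
noncomputable def SS (q : ℚ_[p]) (D : ℕ) (f : Polynomial ℚ_[p]) : ℚ_[p] :=
  ∑ j ∈ Finset.range D, f.coeff j * uu q j

lemma norm_q_eq_one {q : ℚ_[p]} (hq : ‖1 - q‖ < 1) : ‖q‖ = 1 := by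
  have h : q = 1 + -(1 - q) := by ring
  have hne : ‖(1 : ℚ_[p])‖ ≠ ‖-(1 - q)‖ := by
    rw [norm_neg, norm_one]
    intro h'
    rw [← h'] at hq
    linarith
  rw [h, Padic.add_eq_max_of_ne hne, norm_neg, norm_one]
  exact max_eq_left hq.le

lemma norm_one_sub_pow {q : ℚ_[p]} (hq : ‖1 - q‖ < 1) (j : ℕ) : ‖1 - q ^ j‖ < 1 := by
  induction j with
  | zero => simp
  | succ j ih =>
    have h : 1 - q ^ (j + 1) = (1 - q ^ j) + q ^ j * (1 - q) := by ring
    rw [h]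
    refine lt_of_le_of_lt (Padic.nonarchimedean _ _) (max_lt ih ?_)
    rw [norm_mul, norm_pow, norm_q_eq_one hq, one_pow, one_mul]
    exact hq

lemma norm_two_eq_one (hp : Odd p) : ‖(2 : ℚ_[p])‖ = 1 := by
  have h2 : ((2 : ℤ) : ℚ_[p]) = (2 : ℚ_[p]) := by norm_cast
  have hle : ‖(2 : ℚ_[p])‖ ≤ 1 := by rw [← h2]; exact Padic.norm_int_le_one _
  rcases lt_or_eq_of_le hle with hlt | heq
  · exfalso
    rw [← h2, Padic.norm_intCast_lt_one_iff] at hlt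
    have : (p : ℤ) ∣ 2 := hlt
    have hpd : p ∣ 2 := by exact_mod_cast this
    have := (Nat.prime_dvd_prime_iff_eq (Fact.out : p.Prime) Nat.prime_two).mp hpd
    rw [this] at hp
    exact (by norm_num : ¬ Odd 2) hp
  · exact heq

lemma norm_den_eq_one (hp : Odd p) {q : ℚ_[p]} (hq : ‖1 - q‖ < 1) (j : ℕ) :
    ‖1 + q ^ (j + 1)‖ = 1 := by
  have h : 1 + q ^ (j + 1) = (2 : ℚ_[p]) + -(1 - q ^ (j + 1)) := by ring
  rw [h, Padic.add_eq_max_of_ne]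
  · rw [norm_two_eq_one hp]
    have := norm_one_sub_pow hq (j + 1)
    rw [norm_neg]
    exact max_eq_left this.le
  · rw [norm_two_eq_one hp, norm_neg]
    intro h'
    have := norm_one_sub_pow hq (j + 1)
    rw [← h'] at this
    linarith

lemma den_ne_zero (hp : Odd p) {q : ℚ_[p]} (hq : ‖1 - q‖ < 1) (j : ℕ) :
    1 + q ^ (j + 1) ≠ 0 := by
  intro h0
  have := norm_den_eq_one hp hq j
  rw [h0] at this
  simp at this

lemma key_u (hp : Odd p) {q : ℚ_[p]} (hq : ‖1 - q‖ < 1) (j : ℕ) :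
    q ^ (j + 1) * uu q j + uu q j = 1 + q := by
  have hd := den_ne_zero hp hq j
  unfold uu
  field_simp
  ring

lemma SS_sum {q : ℚ_[p]} {D : ℕ} {ι : Type*} (t : Finset ι) (f : ι → Polynomial ℚ_[p]) :
    SS q D (∑ i ∈ t, f i) = ∑ i ∈ t, SS q D (f i) := by
  unfold SS
  simp only [Polynomial.finset_sum_coeff, Finset.sum_mul]
  exact Finset.sum_comm

lemma SS_C_mul {q : ℚ_[p]} {D : ℕ} (c : ℚ_[p]) (f : Polynomial ℚ_[p]) :
    SS q D (C c * f) = c * SS q D f := by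
  unfold SS
  simp only [Polynomial.coeff_C_mul, Finset.mul_sum, mul_assoc]

lemma SS_C_mul_pow {q : ℚ_[p]} {D : ℕ} (c : ℚ_[p]) {l : ℕ} (hl : l < D) :
    SS q D (C c * X ^ l) = c * uu q l := by
  unfold SS
  rw [Finset.sum_eq_single l]
  · simp [Polynomial.coeff_C_mul, Polynomial.coeff_X_pow]
  · intro j _ hj
    simp only [Polynomial.coeff_C_mul, Polynomial.coeff_X_pow, if_neg hj, mul_zero, zero_mul]
  · intro h
    exact absurd (Finset.mem_range.mpr hl) h

lemma coeff_comp_C_mul_X (f : Polynomial ℚ_[p]) (a : ℚ_[p]) (j : ℕ) :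
    (f.comp (C a * X)).coeff j = f.coeff j * a ^ j := by
  induction f using Polynomial.induction_on' with
  | add u v hu hv => simp [Polynomial.add_comp, hu, hv, add_mul]
  | monomial nn c =>
    rw [Polynomial.monomial_comp, mul_pow, ← mul_assoc, ← Polynomial.C_pow, ← Polynomial.C_mul,
      Polynomial.coeff_C_mul, Polynomial.coeff_X_pow, Polynomial.coeff_monomial]
    by_cases h : j = nn
    · subst h; simp
    · rw [if_neg h, if_neg (Ne.symm h)]; simp

lemma SS_shift (hp : Odd p) {q : ℚ_[p]} (hq : ‖1 - q‖ < 1) {D : ℕ} (f : Polynomial ℚ_[p])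
    (hf : f.natDegree < D) :
    q * SS q D (f.comp (C q * X)) + SS q D f = (1 + q) * f.eval 1 := by
  rw [Polynomial.eval_eq_sum_range' hf]
  unfold SS
  rw [Finset.mul_sum, Finset.mul_sum, ← Finset.sum_add_distrib]
  refine Finset.sum_congr rfl fun j _ => ?_
  rw [coeff_comp_C_mul_X]
  have h := key_u hp hq j
  linear_combination f.coeff j * h

lemma SS_binpow (hp : Odd p) {q : ℚ_[p]} {D : ℕ} (a b : ℚ_[p]) {nn : ℕ} (h : nn < D) :
    SS q D ((C a + C b * X) ^ nn)
      = ∑ l ∈ Finset.range (nn + 1), (nn.choose l : ℚ_[p]) * a ^ (nn - l) * b ^ l * uu q l := by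
  rw [add_pow, SS_sum]
  have step : ∀ k ∈ Finset.range (nn + 1),
      SS q D (C a ^ k * (C b * X) ^ (nn - k) * ((nn.choose k : ℕ) : Polynomial ℚ_[p]))
        = (nn.choose k : ℚ_[p]) * a ^ k * b ^ (nn - k) * uu q (nn - k) := by
    intro k hk
    have he : C a ^ k * (C b * X) ^ (nn - k) * ((nn.choose k : ℕ) : Polynomial ℚ_[p])
        = C ((nn.choose k : ℚ_[p]) * a ^ k * b ^ (nn - k)) * X ^ (nn - k) := by
      simp only [map_mul, map_pow, Polynomial.C_eq_natCast, mul_pow]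
      ring
    rw [he, SS_C_mul_pow _ (lt_of_le_of_lt (Nat.le_of_lt_succ
      (Nat.sub_lt_succ nn k |>.trans_le (Nat.succ_le_succ (le_refl nn)))) h)]
  rw [Finset.sum_congr rfl step]
  have hrefl := Finset.sum_range_reflect
    (fun k => (nn.choose k : ℚ_[p]) * a ^ k * b ^ (nn - k) * uu q (nn - k)) (nn + 1)
  simp only [Nat.add_sub_cancel] at hrefl
  rw [← hrefl]
  refine Finset.sum_congr rfl fun l hl => ?_
  have hln : l ≤ nn := Nat.le_of_lt_succ (Finset.mem_range.mp hl)
  rw [Nat.choose_symm hln, Nat.sub_sub_self hln]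

lemma poly_id1 (Z : Polynomial ℚ_[p]) (a b : ℕ) :
    ∑ l ∈ Finset.range (b + 1), (b.choose l : Polynomial ℚ_[p]) * (-1) ^ l * Z ^ (l + a)
      = Z ^ a * (1 - Z) ^ b := by
  rw [show (1 : Polynomial ℚ_[p]) - Z = -Z + 1 by ring, add_pow, Finset.mul_sum]
  refine Finset.sum_congr rfl fun l hl => ?_
  rw [pow_add]
  ring

lemma poly_id2 (Z : Polynomial ℚ_[p]) (a b : ℕ) :
    ∑ l ∈ Finset.range (b + 1), (b.choose l : Polynomial ℚ_[p]) * (-1) ^ (b - l) * Z ^ (a + (b - l))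
      = Z ^ a * (1 - Z) ^ b := by
  have h1 : ∀ l ∈ Finset.range (b + 1),
      (b.choose l : Polynomial ℚ_[p]) * (-1) ^ (b - l) * Z ^ (a + (b - l))
        = (b.choose (b - l) : Polynomial ℚ_[p]) * (-1) ^ (b - l) * Z ^ ((b - l) + a) := by
    intro l hl
    rw [Nat.choose_symm (Nat.le_of_lt_succ (Finset.mem_range.mp hl)), add_comm a]
  rw [Finset.sum_congr rfl h1]
  have hrefl := Finset.sum_range_reflect
    (fun l => (b.choose l : Polynomial ℚ_[p]) * (-1) ^ l * Z ^ (l + a)) (b + 1)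
  simp only [Nat.add_sub_cancel] at hrefl
  rw [hrefl, poly_id1]

lemma natdeg_bound (f g : Polynomial ℚ_[p]) (hf : f.natDegree ≤ 1) (hg : g.natDegree ≤ 1)
    (a b : ℕ) : (f ^ a * g ^ b).natDegree ≤ a + b := by
  refine le_trans (Polynomial.natDegree_mul_le) (add_le_add ?_ ?_)
  · exact le_trans Polynomial.natDegree_pow_le
      (le_trans (Nat.mul_le_mul_left a hf) (by omega))
  · exact le_trans Polynomial.natDegree_pow_le
      (le_trans (Nat.mul_le_mul_left b hg) (by omega))


lemma norm_inv_hyp {q : ℚ_[p]} (hq : ‖1 - q‖ < 1) (hq0 : q ≠ 0) : ‖1 - q⁻¹‖ < 1 := by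
  have h : 1 - q⁻¹ = -(1 - q) * q⁻¹ := by field_simp; ring
  rw [h, norm_mul, norm_neg, norm_inv, norm_q_eq_one hq]
  simpa using hq

lemma xi_q_eq (hp : Odd p) {q : ℚ_[p]} (hq : ‖1 - q‖ < 1) (hq1 : q ≠ 1) {D nn : ℕ}
    (hnn : nn < D) :
    xi q nn 0 = (1 - q)⁻¹ ^ nn * SS q D ((C 1 + C (-1) * X) ^ nn) := by
  rw [SS_binpow hp _ _ hnn, xi]
  simp only [mul_zero, zpow_zero]
  rw [Finset.mul_sum, Finset.mul_sum]
  refine Finset.sum_congr rfl fun l hl => ?_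
  have hd := den_ne_zero hp hq l
  have h1q : (1 : ℚ_[p]) - q ≠ 0 := sub_ne_zero.mpr (Ne.symm hq1)
  have hpow : (1 - q)⁻¹ ^ nn * (1 - q) ^ nn = 1 := by
    rw [inv_pow, inv_mul_cancel₀ (pow_ne_zero _ h1q)]
  unfold uu
  field_simp
  linear_combination (-(q * (nn.choose l : ℚ_[p]) + (nn.choose l : ℚ_[p]))) * hpow

lemma xi_qinv_eq (hp : Odd p) {q : ℚ_[p]} (hq : ‖1 - q‖ < 1) (hq0 : q ≠ 0) (hq1 : q ≠ 1)
    {D nn : ℕ} (hnn : nn < D) :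
    xi q⁻¹ nn 0 = (q * (q - 1)⁻¹) ^ nn * SS q D ((C 1 + C (-q) * X) ^ nn) := by
  rw [SS_binpow hp _ _ hnn, xi]
  simp only [mul_zero, zpow_zero]
  rw [Finset.mul_sum, Finset.mul_sum]
  refine Finset.sum_congr rfl fun l hl => ?_
  have hd := den_ne_zero hp hq l
  have hdi := den_ne_zero hp (norm_inv_hyp hq hq0) l
  have hq1' : q - 1 ≠ 0 := sub_ne_zero.mpr hq1
  have e1 : 1 - q⁻¹ = (q - 1) * q⁻¹ := by field_simp
  have e2 : 1 + q⁻¹ ^ (l + 1) = (1 + q ^ (l + 1)) * (q ^ (l + 1))⁻¹ := by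
    rw [inv_pow]
    field_simp
    ring
  have e3 : 1 + q⁻¹ = (1 + q) * q⁻¹ := by
    field_simp
    ring
  have hY : q ^ nn * (-1 + q)⁻¹ ^ nn * (q * q⁻¹ - q⁻¹) ^ nn = 1 := by
    rw [mul_inv_cancel₀ hq0, e1, show (-1 + q) = q - 1 by ring, ← mul_pow, ← mul_pow]
    rw [show q * (q - 1)⁻¹ * ((q - 1) * q⁻¹) = (q * q⁻¹) * ((q - 1)⁻¹ * (q - 1)) by ring,
      mul_inv_cancel₀ hq0, inv_mul_cancel₀ hq1', one_mul, one_pow]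
  unfold uu
  rw [e1, e2, e3]
  field_simp
  linear_combination (-(q * q ^ l * (nn.choose l : ℚ_[p]) * (-1) ^ l
    + q ^ 2 * q ^ l * (nn.choose l : ℚ_[p]) * (-1) ^ l)) * hY

theorem key (hp : Odd p) (q : ℚ_[p]) (hq : ‖1 - q‖ < 1) (hq1 : q ≠ 1) (m N : ℕ)
    (hm : 1 ≤ m) (hmN : m < N) :
    ∑ l ∈ Finset.range (N - m + 1), ((N - m).choose l : ℚ_[p]) * (-1) ^ l * xi q (l + m) 0
      = q ^ 2 * ∑ l ∈ Finset.range (m + 1),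
          (m.choose l : ℚ_[p]) * (-1) ^ (m - l) * xi q⁻¹ (N - l) 0 := by
  have hq0 : q ≠ 0 := by intro h; rw [h] at hq; simp at hq
  have h1q : (1 : ℚ_[p]) - q ≠ 0 := sub_ne_zero.mpr (Ne.symm hq1)
  have hq1' : q - 1 ≠ 0 := sub_ne_zero.mpr hq1
  have hNm : N - m + m = N := Nat.sub_add_cancel hmN.le
  set D := N + 1 with hD
  set A : Polynomial ℚ_[p] := (1 - X) ^ (N - m) * (C q * X - 1) ^ m with hA
  set Ac : Polynomial ℚ_[p] := (1 - C q * X) ^ (N - m) * (C q * (C q * X) - 1) ^ m with hAc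
  set B : Polynomial ℚ_[p] := (C q - X) ^ (N - m) * (X - 1) ^ m with hB
  have hAcomp : A.comp (C q * X) = Ac := by
    simp only [hA, hAc, Polynomial.mul_comp, Polynomial.pow_comp, Polynomial.sub_comp,
      Polynomial.one_comp, Polynomial.X_comp, Polynomial.C_comp]
  have hBcomp : B.comp (C q * X) = C q ^ (N - m) * A := by
    simp only [hB, hA, Polynomial.mul_comp, Polynomial.pow_comp, Polynomial.sub_comp,
      Polynomial.one_comp, Polynomial.X_comp, Polynomial.C_comp]
    rw [show (C q : Polynomial ℚ_[p]) - C q * X = C q * (1 - X) by ring, mul_pow]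
    ring
  have hdeg1 : (1 - X : Polynomial ℚ_[p]).natDegree ≤ 1 := by
    refine le_trans (Polynomial.natDegree_sub_le _ _) ?_
    simp [Polynomial.natDegree_one, Polynomial.natDegree_X]
  have hdeg2 : (C q * X - 1 : Polynomial ℚ_[p]).natDegree ≤ 1 := by
    refine le_trans (Polynomial.natDegree_sub_le _ _) ?_
    simp only [Polynomial.natDegree_one, max_le_iff]
    exact ⟨le_trans (Polynomial.natDegree_C_mul_le _ _) (le_of_eq Polynomial.natDegree_X), by omega⟩
  have hdeg3 : (C q - X : Polynomial ℚ_[p]).natDegree ≤ 1 := by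
    refine le_trans (Polynomial.natDegree_sub_le _ _) ?_
    simp [Polynomial.natDegree_C, Polynomial.natDegree_X]
  have hdeg4 : (X - 1 : Polynomial ℚ_[p]).natDegree ≤ 1 := by
    refine le_trans (Polynomial.natDegree_sub_le _ _) ?_
    simp [Polynomial.natDegree_one, Polynomial.natDegree_X]
  have hdegA : A.natDegree < D := by
    have := natdeg_bound (1 - X) (C q * X - 1) hdeg1 hdeg2 (N - m) m
    rw [← hA] at this
    omega
  have hdegB : B.natDegree < D := by
    have := natdeg_bound (C q - X) (X - 1) hdeg3 hdeg4 (N - m) m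
    rw [← hB] at this
    omega
  have hAeval : A.eval 1 = 0 := by
    simp [hA, zero_pow (show N - m ≠ 0 by omega)]
  have hBeval : B.eval 1 = 0 := by
    simp [hB, zero_pow (show m ≠ 0 by omega)]
  have h1 : q * SS q D Ac + SS q D A = 0 := by
    have h := SS_shift hp hq A hdegA
    rw [hAcomp, hAeval, mul_zero] at h
    exact h
  have h2 : q * (q ^ (N - m) * SS q D A) + SS q D B = 0 := by
    have h := SS_shift hp hq B hdegB
    rw [hBcomp, hBeval, mul_zero, ← Polynomial.C_pow, SS_C_mul] at h
    exact h
  -- the LHS polynomial identity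
  have hZ : (1 : Polynomial ℚ_[p]) - C (1 - q)⁻¹ * (1 - X) = C (1 - q)⁻¹ * (X - C q) := by
    have h1' : (C (1 - q)⁻¹ : Polynomial ℚ_[p]) * C (1 - q) = 1 := by
      rw [← Polynomial.C_mul, inv_mul_cancel₀ h1q, Polynomial.C_1]
    simp only [map_sub, Polynomial.C_1] at h1'
    linear_combination (-1 : Polynomial ℚ_[p]) * h1'
  have hLpoly : ∑ l ∈ Finset.range (N - m + 1),
      C (((N - m).choose l : ℚ_[p]) * (-1) ^ l * (1 - q)⁻¹ ^ (l + m))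
        * ((C 1 + C (-1) * X) ^ (l + m))
      = C ((1 - q)⁻¹ ^ N) * ((1 - X) ^ m * (X - C q) ^ (N - m)) := by
    have hP : (C 1 + C (-1) * X : Polynomial ℚ_[p]) = 1 - X := by
      rw [Polynomial.C_1, map_neg, Polynomial.C_1]; ring
    simp only [hP]
    have step : ∀ l ∈ Finset.range (N - m + 1),
        C (((N - m).choose l : ℚ_[p]) * (-1) ^ l * (1 - q)⁻¹ ^ (l + m)) * ((1 - X) ^ (l + m))
          = ((N - m).choose l : Polynomial ℚ_[p]) * (-1) ^ l
              * (C (1 - q)⁻¹ * (1 - X)) ^ (l + m) := by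
      intro l hl
      simp only [map_mul, map_pow, map_neg, map_one, Polynomial.C_eq_natCast, mul_pow]
      ring
    rw [Finset.sum_congr rfl step, poly_id1 (C (1 - q)⁻¹ * (1 - X)) m (N - m), hZ]
    rw [mul_pow, mul_pow]
    rw [show ((1 - q)⁻¹ ^ N : ℚ_[p]) = (1 - q)⁻¹ ^ m * (1 - q)⁻¹ ^ (N - m) by
      rw [← pow_add]; congr 1; omega]
    rw [map_mul, map_pow, map_pow]
    ring
  -- the RHS polynomial identity
  have hY : (1 : Polynomial ℚ_[p]) - C (q * (q - 1)⁻¹) * (1 - C q * X)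
      = C (q - 1)⁻¹ * (C q * (C q * X) - 1) := by
    have h1' : (C (q - 1)⁻¹ : Polynomial ℚ_[p]) * C (q - 1) = 1 := by
      rw [← Polynomial.C_mul, inv_mul_cancel₀ hq1', Polynomial.C_1]
    simp only [map_sub, map_mul, Polynomial.C_1] at h1' ⊢
    linear_combination (-1 : Polynomial ℚ_[p]) * h1'
  have hRpoly : ∑ l ∈ Finset.range (m + 1),
      C ((m.choose l : ℚ_[p]) * (-1) ^ (m - l) * (q * (q - 1)⁻¹) ^ (N - l))
        * ((C 1 + C (-q) * X) ^ (N - l))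
      = C ((q * (q - 1)⁻¹) ^ (N - m) * ((q - 1)⁻¹) ^ m) * Ac := by
    have hP2 : (C 1 + C (-q) * X : Polynomial ℚ_[p]) = 1 - C q * X := by
      rw [Polynomial.C_1, map_neg]; ring
    simp only [hP2]
    have step : ∀ l ∈ Finset.range (m + 1),
        C ((m.choose l : ℚ_[p]) * (-1) ^ (m - l) * (q * (q - 1)⁻¹) ^ (N - l))
            * ((1 - C q * X) ^ (N - l))
          = (m.choose l : Polynomial ℚ_[p]) * (-1) ^ (m - l)
              * (C (q * (q - 1)⁻¹) * (1 - C q * X)) ^ ((N - m) + (m - l)) := by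
      intro l hl
      have hexp : N - l = (N - m) + (m - l) := by
        have := Finset.mem_range.mp hl; omega
      rw [hexp]
      simp only [map_mul, map_pow, map_neg, map_one, Polynomial.C_eq_natCast, mul_pow]
      ring
    rw [Finset.sum_congr rfl step, poly_id2 (C (q * (q - 1)⁻¹) * (1 - C q * X)) (N - m) m, hY]
    rw [hAc, mul_pow, mul_pow]
    simp only [map_mul, map_pow]
    ring
  -- rewrite LHS
  have hL : ∑ l ∈ Finset.range (N - m + 1),
      ((N - m).choose l : ℚ_[p]) * (-1) ^ l * xi q (l + m) 0
      = (1 - q)⁻¹ ^ N * SS q D ((1 - X) ^ m * (X - C q) ^ (N - m)) := by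
    calc ∑ l ∈ Finset.range (N - m + 1),
        ((N - m).choose l : ℚ_[p]) * (-1) ^ l * xi q (l + m) 0
        = ∑ l ∈ Finset.range (N - m + 1),
            SS q D (C (((N - m).choose l : ℚ_[p]) * (-1) ^ l * (1 - q)⁻¹ ^ (l + m))
              * ((C 1 + C (-1) * X) ^ (l + m))) := by
          refine Finset.sum_congr rfl fun l hl => ?_
          have hlD : l + m < D := by
            have := Finset.mem_range.mp hl; omega
          rw [xi_q_eq hp hq hq1 hlD, SS_C_mul]
          ring
      _ = SS q D (∑ l ∈ Finset.range (N - m + 1),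
            C (((N - m).choose l : ℚ_[p]) * (-1) ^ l * (1 - q)⁻¹ ^ (l + m))
              * ((C 1 + C (-1) * X) ^ (l + m))) := (SS_sum _ _).symm
      _ = SS q D (C ((1 - q)⁻¹ ^ N) * ((1 - X) ^ m * (X - C q) ^ (N - m))) := by rw [hLpoly]
      _ = (1 - q)⁻¹ ^ N * SS q D ((1 - X) ^ m * (X - C q) ^ (N - m)) := SS_C_mul _ _
  -- rewrite RHS
  have hR : ∑ l ∈ Finset.range (m + 1),
      (m.choose l : ℚ_[p]) * (-1) ^ (m - l) * xi q⁻¹ (N - l) 0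
      = (q * (q - 1)⁻¹) ^ (N - m) * ((q - 1)⁻¹) ^ m * SS q D Ac := by
    calc ∑ l ∈ Finset.range (m + 1),
        (m.choose l : ℚ_[p]) * (-1) ^ (m - l) * xi q⁻¹ (N - l) 0
        = ∑ l ∈ Finset.range (m + 1),
            SS q D (C ((m.choose l : ℚ_[p]) * (-1) ^ (m - l) * (q * (q - 1)⁻¹) ^ (N - l))
              * ((C 1 + C (-q) * X) ^ (N - l))) := by
          refine Finset.sum_congr rfl fun l hl => ?_
          have hlD : N - l < D := by omega
          rw [xi_qinv_eq hp hq hq0 hq1 hlD, SS_C_mul]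
          ring
      _ = SS q D (∑ l ∈ Finset.range (m + 1),
            C ((m.choose l : ℚ_[p]) * (-1) ^ (m - l) * (q * (q - 1)⁻¹) ^ (N - l))
              * ((C 1 + C (-q) * X) ^ (N - l))) := (SS_sum _ _).symm
      _ = SS q D (C ((q * (q - 1)⁻¹) ^ (N - m) * ((q - 1)⁻¹) ^ m) * Ac) := by rw [hRpoly]
      _ = (q * (q - 1)⁻¹) ^ (N - m) * ((q - 1)⁻¹) ^ m * SS q D Ac := SS_C_mul _ _
  rw [hL, hR]
  -- relate B to the LHS polynomial
  have hBid : B = C ((-1 : ℚ_[p]) ^ N) * ((1 - X) ^ m * (X - C q) ^ (N - m)) := by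
    rw [hB, map_pow, map_neg, Polynomial.C_1]
    rw [show (C q : Polynomial ℚ_[p]) - X = (-1) * (X - C q) by ring,
      show (X : Polynomial ℚ_[p]) - 1 = (-1) * (1 - X) by ring, mul_pow, mul_pow]
    rw [show ((-1 : Polynomial ℚ_[p])) ^ N = (-1) ^ (N - m) * (-1) ^ m by
      rw [← pow_add, hNm]]
    ring
  have hSSB : SS q D B = (-1 : ℚ_[p]) ^ N * SS q D ((1 - X) ^ m * (X - C q) ^ (N - m)) := by
    rw [hBid, SS_C_mul]
  have hsq : ((-1 : ℚ_[p]) ^ N) * ((-1 : ℚ_[p]) ^ N) = 1 := by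
    rw [← pow_add]
    exact Even.neg_one_pow ⟨N, rfl⟩
  have hBp : SS q D ((1 - X) ^ m * (X - C q) ^ (N - m)) = (-1 : ℚ_[p]) ^ N * SS q D B := by
    rw [hSSB, ← mul_assoc, hsq, one_mul]
  rw [hBp]
  have hz : SS q D B = q ^ (N - m) * q * (q * SS q D Ac) := by
    linear_combination h2 - (q ^ (N - m) * q) * h1
  rw [hz]
  have ha : ((1 - q)⁻¹ * -1 : ℚ_[p]) = (q - 1)⁻¹ := by
    rw [mul_neg_one, neg_inv]
    congr 1
    ring
  calc (1 - q)⁻¹ ^ N * ((-1 : ℚ_[p]) ^ N * (q ^ (N - m) * q * (q * SS q D Ac)))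
      = ((1 - q)⁻¹ * -1) ^ N * (q ^ (N - m) * q * (q * SS q D Ac)) := by
        rw [mul_pow]; ring
    _ = (q - 1)⁻¹ ^ (N - m) * (q - 1)⁻¹ ^ m * (q ^ (N - m) * q * (q * SS q D Ac)) := by
        rw [ha, ← pow_add, hNm]
    _ = q ^ 2 * ((q * (q - 1)⁻¹) ^ (N - m) * ((q - 1)⁻¹) ^ m * SS q D Ac) := by
        rw [mul_pow]; ring

end AuxStmt18

theorem stmt18 (p : ℕ) [Fact p.Prime] (hp : Odd p) (q : ℚ_[p]) (hq : ‖1 - q‖ < 1) (hq1 : q ≠ 1) (s : ℕ) (hs : 1 ≤ s) (n : Fin s → ℕ) (k : ℕ) (hk : 1 ≤ k)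
    (hN : s * k < ∑ i, n i) :
    ∑ l ∈ Finset.range ((∑ i, n i) - s * k + 1),
        (((∑ i, n i) - s * k).choose l : ℚ_[p]) * (-1) ^ l * xi q (l + s * k) 0
      = q ^ 2 * ∑ l ∈ Finset.range (s * k + 1),
          ((s * k).choose l : ℚ_[p]) * (-1) ^ (s * k - l) * xi q⁻¹ ((∑ i, n i) - l) 0 := by
  have hm : 1 ≤ s * k := by
    have := Nat.mul_le_mul hs hk
    simpa using this
  exact key hp q hq hq1 (s * k) (∑ i, n i) hm hN
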